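/- Let μ be a compactly supported Borel probability measure on ℝ and Λ ⊂ ℝ a countable set. Then {e^{-2πiλx} : λ ∈ Λ} is an orthonormal basis of L²(μ) if and only if Q(ξ) := ∑_{λ∈Λ} |μ̂(ξ+λ)|² = 1 for all ξ ∈ ℝ. -/

import Mathlib

open MeasureTheory Complex Real
open scoped ENNReal BoundedContinuousFunction

/-- The Fourier transform `μ̂(ξ) = ∫ e^{-2πiξx} dμ(x)`. -/
noncomputable def FT (μ : Measure ℝ) (ξ : ℝ) : ℂ :=
  ∫ x, Complex.exp (-2 * Real.pi * Complex.I * ξ * x) ∂μ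

/-- The family of exponentials `e_λ, λ ∈ Λ`, is orthonormal in `L²(μ)`:
equivalently `μ̂(λ - λ') = δ_{λλ'}`. -/
def ExpOrthonormal (μ : Measure ℝ) (Λ : Set ℝ) : Prop :=
  ∀ l ∈ Λ, ∀ l' ∈ Λ, FT μ (l - l') = if l = l' then 1 else 0

/-- The family of exponentials `e_λ, λ ∈ Λ` is total in `L²(μ)`: any `f ∈ L²(μ)`
orthogonal to all of them vanishes. Together with orthonormality this says the
family is a maximal orthonormal set, i.e. an orthonormal basis of `L²(μ)`. -/
def ExpTotal (μ : Measure ℝ) (Λ : Set ℝ) : Prop :=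
  ∀ f : Lp ℂ 2 μ,
    (∀ l ∈ Λ, ∫ x, f x *
      (starRingEnd ℂ) (Complex.exp (-2 * Real.pi * Complex.I * l * x)) ∂μ = 0) → f = 0

namespace Stmt4Aux

local notation "⟪" x ", " y "⟫" => @inner ℂ _ _ x y

noncomputable def efun (ξ : ℝ) : ℝ → ℂ := fun x => Complex.exp (-2 * Real.pi * Complex.I * ξ * x)

lemma efun_norm (ξ x : ℝ) : ‖efun ξ x‖ = 1 := by
  have : (-2 * (Real.pi:ℂ) * Complex.I * ξ * x) = ((-2 * Real.pi * ξ * x : ℝ) : ℂ) * Complex.I := by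
    push_cast; ring
  rw [efun, this, Complex.norm_exp_ofReal_mul_I]

lemma efun_continuous (ξ : ℝ) : Continuous (efun ξ) := by
  unfold efun; fun_prop

noncomputable def ebcf (ξ : ℝ) : ℝ →ᵇ ℂ :=
  BoundedContinuousFunction.ofNormedAddCommGroup (efun ξ) (efun_continuous ξ) 1
    (fun x => le_of_eq (efun_norm ξ x))

lemma ebcf_apply (ξ x : ℝ) : ebcf ξ x = Complex.exp (-2 * Real.pi * Complex.I * ξ * x) := rfl

variable (μ : Measure ℝ) [IsProbabilityMeasure μ]

noncomputable def E (ξ : ℝ) : Lp ℂ 2 μ := BoundedContinuousFunction.toLp 2 μ ℂ (ebcf ξ)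

lemma E_ae (ξ : ℝ) : E μ ξ =ᵐ[μ] efun ξ := BoundedContinuousFunction.coeFn_toLp 2 μ ℂ (ebcf ξ)

lemma FT_zero : FT μ 0 = 1 := by
  have h : ∀ x : ℝ, Complex.exp (-2 * Real.pi * Complex.I * ((0:ℝ):ℂ) * x) = 1 := by
    intro x
    norm_num
  rw [FT]
  rw [integral_congr_ae (Filter.Eventually.of_forall h), integral_const, probReal_univ]
  simp

lemma inner_E (a b : ℝ) : ⟪E μ a, E μ b⟫ = FT μ (b - a) := by
  rw [MeasureTheory.L2.inner_def, FT]
  have h1 := E_ae μ a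
  have h2 := E_ae μ b
  refine integral_congr_ae ?_
  filter_upwards [h1, h2] with x hx1 hx2
  rw [RCLike.inner_apply, hx1, hx2, efun, efun, ← Complex.exp_conj, ← Complex.exp_add]
  congr 1
  simp only [map_mul, map_neg, map_ofNat, Complex.conj_I, Complex.conj_ofReal]
  push_cast
  ring

lemma norm_E (a : ℝ) : ‖E μ a‖ = 1 := by
  have h : ⟪E μ a, E μ a⟫ = ((1:ℝ):ℂ) := by
    rw [inner_E, sub_self, FT_zero]; norm_num
  rw [inner_self_eq_norm_sq_to_K] at h
  have h2 : ‖E μ a‖ ^ 2 = 1 := by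
    have h3 : ((‖E μ a‖ ^ 2 : ℝ) : ℂ) = ((1:ℝ):ℂ) := by push_cast; simpa using h
    exact_mod_cast h3
  nlinarith [norm_nonneg (E μ a)]

omit [IsProbabilityMeasure μ] in
lemma FT_neg (t : ℝ) : FT μ (-t) = (starRingEnd ℂ) (FT μ t) := by
  rw [FT, FT, ← integral_conj]
  refine integral_congr_ae (Filter.Eventually.of_forall fun x => ?_)
  show Complex.exp _ = (starRingEnd ℂ) (Complex.exp _)
  rw [← Complex.exp_conj]
  congr 1
  simp only [map_mul, map_neg, map_ofNat, Complex.conj_I, Complex.conj_ofReal]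
  push_cast
  ring

lemma abs_inner_E (ξ : ℝ) (l : ℝ) :
    ‖⟪E μ l, E μ (-ξ)⟫‖ = ‖FT μ (ξ + l)‖ := by
  rw [inner_E]
  have : -ξ - l = -(ξ + l) := by ring
  rw [this, FT_neg, Complex.norm_conj]

lemma dense_exp (hcpt : ∃ K : Set ℝ, IsCompact K ∧ μ Kᶜ = 0) :
    (Submodule.span ℂ (Set.range (fun ξ : ℝ => E μ ξ))).topologicalClosure = ⊤ := by
  obtain ⟨K, hK, hKc⟩ := hcpt
  haveI : CompactSpace K := isCompact_iff_compactSpace.mp hK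
  have haeK : ∀ᵐ x ∂μ, x ∈ K := by
    rw [MeasureTheory.ae_iff]
    exact hKc
  let ρ : (ℝ →ᵇ ℂ) →ₗ[ℂ] C(K, ℂ) :=
    { toFun := fun q => (q.toContinuousMap.restrict K)
      map_add' := fun q r => by ext x; simp
      map_smul' := fun c q => by ext x; simp }
  have hρ_apply : ∀ (q : ℝ →ᵇ ℂ) (x : K), ρ q x = q (x : ℝ) := fun q x => rfl
  set φ : ℝ → C(K, ℂ) := fun ξ => ρ (ebcf ξ) with hφ
  have hφ_mul : ∀ a b, φ a * φ b = φ (a + b) := by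
    intro a b; ext x
    show ebcf a x * ebcf b x = ebcf (a + b) x
    rw [ebcf_apply, ebcf_apply, ebcf_apply, ← Complex.exp_add]
    congr 1; push_cast; ring
  have hφ_zero : φ 0 = 1 := by
    ext x
    show ebcf 0 x = 1
    rw [ebcf_apply]
    norm_num
  have hφ_star : ∀ a, star (φ a) = φ (-a) := by
    intro a; ext x
    show star (ebcf a (x : ℝ)) = ebcf (-a) x
    rw [ebcf_apply, ebcf_apply]
    show (starRingEnd ℂ) _ = _
    rw [← Complex.exp_conj]
    congr 1
    simp only [map_mul, map_neg, map_ofNat, Complex.conj_I, Complex.conj_ofReal]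
    push_cast; ring
  have hstar_range : Set.range φ ∪ star (Set.range φ) = Set.range φ := by
    apply Set.union_eq_self_of_subset_right
    rintro f hf
    rw [Set.mem_star] at hf
    obtain ⟨a, ha⟩ := hf
    refine ⟨-a, ?_⟩
    rw [← hφ_star, ha, star_star]
  let M : Submonoid C(K, ℂ) :=
    { carrier := Set.range φ
      one_mem' := ⟨0, hφ_zero⟩
      mul_mem' := by rintro _ _ ⟨a, rfl⟩ ⟨b, rfl⟩; exact ⟨a + b, (hφ_mul a b).symm⟩ }
  set SA : StarSubalgebra ℂ C(K, ℂ) := StarAlgebra.adjoin ℂ (Set.range φ) with hSA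
  have hsep : SA.SeparatesPoints := by
    intro x y hxy
    have hxyR : (x : ℝ) ≠ (y : ℝ) := fun h => hxy (Subtype.ext h)
    set ξ : ℝ := (2 * ((x : ℝ) - y))⁻¹ with hξ
    refine ⟨_, ⟨φ ξ, StarAlgebra.subset_adjoin ℂ _ ⟨ξ, rfl⟩, rfl⟩, ?_⟩
    show φ ξ x ≠ φ ξ y
    rw [hρ_apply, hρ_apply, ebcf_apply, ebcf_apply]
    intro h
    have hsub : ((x : ℝ) : ℂ) - ((y : ℝ) : ℂ) ≠ 0 := by
      rw [sub_ne_zero]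
      exact_mod_cast hxyR
    have h2 : Complex.exp (-2 * Real.pi * Complex.I * ξ * x - -2 * Real.pi * Complex.I * ξ * y) = 1 := by
      rw [Complex.exp_sub, h, div_self (Complex.exp_ne_zero _)]
    have h3 : (-2 * (Real.pi : ℂ) * Complex.I * ξ * x - -2 * Real.pi * Complex.I * ξ * y)
        = -(Real.pi * Complex.I) := by
      rw [hξ]
      push_cast
      field_simp
      ring
    rw [h3, Complex.exp_neg, Complex.exp_pi_mul_I] at h2
    norm_num at h2
  have hd : SA.topologicalClosure = ⊤ :=
    ContinuousMap.starSubalgebra_topologicalClosure_eq_top_of_separatesPoints SA hsep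
  have hSA_span : (SA : Set C(K, ℂ)) ⊆ (Submodule.span ℂ (Set.range φ) : Set C(K, ℂ)) := by
    intro f hf
    have h2 : f ∈ Algebra.adjoin ℂ (Set.range φ) := by
      have : SA.toSubalgebra = Algebra.adjoin ℂ (Set.range φ) := by
        rw [hSA, StarAlgebra.adjoin_toSubalgebra, hstar_range]
      rw [← this]
      exact hf
    have h3 : f ∈ Submodule.span ℂ (Submonoid.closure (Set.range φ) : Set C(K, ℂ)) := by
      rw [← Algebra.adjoin_eq_span]
      exact h2
    have h4 : (Submonoid.closure (Set.range φ) : Set C(K, ℂ)) = Set.range φ := by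
      have : Submonoid.closure (Set.range φ) = M := Submonoid.closure_eq M
      rw [this]; rfl
    rwa [h4] at h3
  have key : ∀ g : ℝ →ᵇ ℂ, (BoundedContinuousFunction.toLp (E := ℂ) 2 μ ℂ g : Lp ℂ 2 μ) ∈
      (Submodule.span ℂ (Set.range (fun ξ : ℝ => E μ ξ))).topologicalClosure := by
    intro g
    rw [← SetLike.mem_coe, Submodule.topologicalClosure_coe, Metric.mem_closure_iff]
    intro ε hε
    have hmem : (ρ g) ∈ closure (SA : Set C(K, ℂ)) := by
      rw [← StarSubalgebra.topologicalClosure_coe, hd]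
      trivial
    rw [Metric.mem_closure_iff] at hmem
    obtain ⟨p, hpSA, hpd⟩ := hmem (ε / 2) (by positivity)
    have hp_span : p ∈ Submodule.span ℂ (Set.range φ) := hSA_span hpSA
    have hrangeφ : Set.range φ = ρ '' Set.range ebcf := by
      rw [← Set.range_comp]; rfl
    rw [hrangeφ, ← Submodule.map_span] at hp_span
    obtain ⟨q, hq, rfl⟩ := hp_span
    refine ⟨BoundedContinuousFunction.toLp (E := ℂ) 2 μ ℂ q, ?_, ?_⟩
    · have h5 := Submodule.mem_map_of_mem
        (f := (BoundedContinuousFunction.toLp (E := ℂ) 2 μ ℂ : (ℝ →ᵇ ℂ) →ₗ[ℂ] Lp ℂ 2 μ)) hq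
      rw [Submodule.map_span, ← Set.range_comp] at h5
      exact h5
    · have hptw : ∀ᵐ x ∂μ, ‖(g - q) x‖ ≤ ε / 2 := by
        filter_upwards [haeK] with x hx
        have h6 : ‖(ρ (g - q)) ⟨x, hx⟩‖ ≤ ‖ρ (g - q)‖ := ContinuousMap.norm_coe_le_norm _ _
        have h7 : ρ (g - q) = ρ g - ρ q := map_sub ρ g q
        have h8 : ‖ρ g - ρ q‖ = dist (ρ g) (ρ q) := (dist_eq_norm _ _).symm
        calc ‖(g - q) x‖ = ‖(ρ (g - q)) ⟨x, hx⟩‖ := by rw [hρ_apply]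
          _ ≤ ‖ρ (g - q)‖ := h6
          _ = dist (ρ g) (ρ q) := by rw [h7, h8]
          _ ≤ ε / 2 := le_of_lt hpd
      have h9 : eLpNorm (⇑(g - q)) 2 μ ≤ ENNReal.ofReal (ε / 2) := by
        have := eLpNorm_le_of_ae_bound (p := 2) (μ := μ) hptw
        simpa [measure_univ] using this
      rw [dist_eq_norm, ← map_sub, Lp.norm_def,
        eLpNorm_congr_ae (BoundedContinuousFunction.coeFn_toLp 2 μ ℂ (g - q))]
      calc (eLpNorm (⇑(g - q)) 2 μ).toReal ≤ (ENNReal.ofReal (ε / 2)).toReal :=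
            ENNReal.toReal_mono ENNReal.ofReal_ne_top h9
        _ = ε / 2 := ENNReal.toReal_ofReal (by positivity)
        _ < ε := by linarith
  rw [Submodule.eq_top_iff']
  intro f
  have hdense : DenseRange (BoundedContinuousFunction.toLp (E := ℂ) 2 μ ℂ :
      (ℝ →ᵇ ℂ) →L[ℂ] Lp ℂ 2 μ) :=
    BoundedContinuousFunction.toLp_denseRange ℂ μ ℂ (by norm_num)
  have h1 : (f : Lp ℂ 2 μ) ∈ closure (Set.range
      (BoundedContinuousFunction.toLp (E := ℂ) 2 μ ℂ : (ℝ →ᵇ ℂ) →L[ℂ] Lp ℂ 2 μ)) := hdense f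
  have h2 : Set.range (BoundedContinuousFunction.toLp (E := ℂ) 2 μ ℂ :
      (ℝ →ᵇ ℂ) →L[ℂ] Lp ℂ 2 μ) ⊆
      ((Submodule.span ℂ (Set.range (fun ξ : ℝ => E μ ξ))).topologicalClosure : Set (Lp ℂ 2 μ)) := by
    rintro _ ⟨g, rfl⟩
    exact key g
  exact closure_minimal h2 (Submodule.isClosed_topologicalClosure _) h1

lemma inner_E_f (l : ℝ) (f : Lp ℂ 2 μ) :
    ⟪E μ l, f⟫ = ∫ x, f x * (starRingEnd ℂ) (Complex.exp (-2 * Real.pi * Complex.I * l * x)) ∂μ := by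
  rw [MeasureTheory.L2.inner_def]
  refine integral_congr_ae ?_
  filter_upwards [E_ae μ l] with x hx
  rw [RCLike.inner_apply, hx, mul_comm]
  exact mul_comm _ _

lemma parseval (Λ : Set ℝ) (hON : Orthonormal ℂ (fun l : Λ => E μ (l : ℝ)))
    (htop : (Submodule.span ℂ (Set.range (fun l : Λ => E μ (l : ℝ)))).topologicalClosure = ⊤)
    (x : Lp ℂ 2 μ) :
    ∑' l : Λ, ‖⟪E μ (l : ℝ), x⟫‖ ^ 2 = ‖x‖ ^ 2 := by
  let b : HilbertBasis Λ ℂ (Lp ℂ 2 μ) := HilbertBasis.mk hON (by rw [htop])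
  have hb : ⇑b = fun l : Λ => E μ (l : ℝ) := HilbertBasis.coe_mk _ _
  have h1 := b.tsum_inner_mul_inner x x
  have h2 : ∀ l : Λ, ⟪x, b l⟫ * ⟪b l, x⟫ = ((‖⟪E μ (l : ℝ), x⟫‖ ^ 2 : ℝ) : ℂ) := by
    intro l
    rw [← inner_conj_symm x (b l), RCLike.conj_mul, hb]
    norm_cast
  rw [tsum_congr h2, inner_self_eq_norm_sq_to_K] at h1
  rw [← Complex.ofReal_tsum] at h1
  norm_cast at h1
  exact Complex.ofReal_injective h1

lemma mem_closure_span (Λ : Set ℝ) (hON : Orthonormal ℂ (fun l : Λ => E μ (l : ℝ)))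
    (x : Lp ℂ 2 μ) (hx : ‖x‖ = 1)
    (hQ : ∑' l : Λ, ‖⟪E μ (l : ℝ), x⟫‖ ^ 2 = 1) :
    x ∈ (Submodule.span ℂ (Set.range (fun l : Λ => E μ (l : ℝ)))).topologicalClosure := by
  set V := (Submodule.span ℂ (Set.range (fun l : Λ => E μ (l : ℝ)))).topologicalClosure with hV
  haveI : CompleteSpace V := (Submodule.isClosed_topologicalClosure _).completeSpace_coe
  set y : Lp ℂ 2 μ := (V.orthogonalProjection x : Lp ℂ 2 μ) with hy
  have hyV : y ∈ V := SetLike.coe_mem _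
  have hEV : ∀ l : Λ, E μ (l : ℝ) ∈ V := fun l =>
    Submodule.le_topologicalClosure _ (Submodule.subset_span ⟨l, rfl⟩)
  have hsub : x - y ∈ Vᗮ := V.sub_starProjection_mem_orthogonal x
  have hinner : ∀ l : Λ, ⟪E μ (l : ℝ), x⟫ = ⟪E μ (l : ℝ), y⟫ := by
    intro l
    have h0 : ⟪E μ (l : ℝ), x - y⟫ = 0 := (Submodule.mem_orthogonal V (x - y)).mp hsub _ (hEV l)
    rw [inner_sub_right] at h0
    exact sub_eq_zero.mp h0
  have hBessel : ∑' l : Λ, ‖⟪E μ (l : ℝ), y⟫‖ ^ 2 ≤ ‖y‖ ^ 2 := hON.tsum_inner_products_le y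
  have h1 : (1 : ℝ) ≤ ‖y‖ ^ 2 := by
    rw [← hQ]
    calc ∑' l : Λ, ‖⟪E μ (l : ℝ), x⟫‖ ^ 2 = ∑' l : Λ, ‖⟪E μ (l : ℝ), y⟫‖ ^ 2 :=
          tsum_congr fun l => by rw [hinner]
      _ ≤ ‖y‖ ^ 2 := hBessel
  have horth : ⟪y, x - y⟫ = (0 : ℂ) := (Submodule.mem_orthogonal V (x - y)).mp hsub y hyV
  have hpyth : ‖x‖ ^ 2 = ‖y‖ ^ 2 + ‖x - y‖ ^ 2 := by
    have h4 := norm_add_sq (𝕜 := ℂ) y (x - y)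
    rw [add_sub_cancel, horth] at h4
    simpa using h4
  have h5 : ‖x - y‖ = 0 := by
    have h6 : ‖x - y‖ ^ 2 ≤ 0 := by
      rw [hx] at hpyth
      nlinarith
    nlinarith [norm_nonneg (x - y)]
  have hxy : x = y := by
    rw [← sub_eq_zero]
    exact norm_eq_zero.mp h5
  rw [hxy]
  exact hyV

end Stmt4Aux


namespace Stmt4Aux

variable (μ : Measure ℝ) [IsProbabilityMeasure μ]

local notation "⟪" x ", " y "⟫" => @inner ℂ _ _ x y

lemma orthonormal_of (Λ : Set ℝ) (hON : ExpOrthonormal μ Λ) :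
    Orthonormal ℂ (fun l : Λ => E μ (l : ℝ)) := by
  classical
  rw [orthonormal_iff_ite]
  intro i j
  rw [inner_E]
  have h := hON (j : ℝ) j.2 (i : ℝ) i.2
  rw [h]
  by_cases hij : i = j
  · rw [if_pos hij, if_pos (by rw [hij])]
  · rw [if_neg hij, if_neg (fun hc => hij (Subtype.ext hc.symm))]

end Stmt4Aux


open Stmt4Aux

theorem stmt_4 (μ : Measure ℝ) [IsProbabilityMeasure μ]
    (hcpt : ∃ K : Set ℝ, IsCompact K ∧ μ Kᶜ = 0)
    (Λ : Set ℝ) (hΛ : Λ.Countable) :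
    (ExpOrthonormal μ Λ ∧ ExpTotal μ Λ) ↔
      ∀ ξ : ℝ, (∑' l : Λ, ‖FT μ (ξ + (l : ℝ))‖ ^ 2) = 1 := by
  constructor
  · rintro ⟨hON, hTot⟩ ξ
    have hon := orthonormal_of μ Λ hON
    have htop : (Submodule.span ℂ (Set.range (fun l : Λ => E μ (l : ℝ)))).topologicalClosure = ⊤ := by
      rw [Submodule.topologicalClosure_eq_top_iff, Submodule.eq_bot_iff]
      intro f hf
      apply hTot f
      intro l hl
      rw [← inner_E_f]
      exact (Submodule.mem_orthogonal _ f).mp hf _ (Submodule.subset_span ⟨⟨l, hl⟩, rfl⟩)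
    calc (∑' l : Λ, ‖FT μ (ξ + (l : ℝ))‖ ^ 2)
        = ∑' l : Λ, ‖@inner ℂ _ _ (E μ (l : ℝ)) (E μ (-ξ))‖ ^ 2 :=
          tsum_congr fun l => by rw [abs_inner_E]
      _ = ‖E μ (-ξ)‖ ^ 2 := parseval μ Λ hon htop (E μ (-ξ))
      _ = 1 := by rw [norm_E]; norm_num
  · intro hQ
    have horth : ExpOrthonormal μ Λ := by
      intro l hl l' hl'
      by_cases h : l = l'
      · rw [if_pos h, h, sub_self, FT_zero]
      · rw [if_neg h]
        have h1 := hQ (-l')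
        set a : Λ → ℝ := fun j => ‖FT μ (-l' + (j : ℝ))‖ ^ 2 with ha
        have hsum : Summable a := by
          by_contra hs
          rw [tsum_eq_zero_of_not_summable hs] at h1
          norm_num at h1
        have hone : a ⟨l', hl'⟩ = 1 := by
          simp only [ha]
          rw [show -l' + l' = (0:ℝ) by ring, FT_zero]
          simp
        have hnonneg : ∀ j, 0 ≤ a j := fun j => by positivity
        have hne : (⟨l', hl'⟩ : Λ) ≠ ⟨l, hl⟩ := fun hc => h (congrArg Subtype.val hc).symm
        have hfin : a ⟨l', hl'⟩ + a ⟨l, hl⟩ ≤ 1 := by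
          have h2 := hsum.sum_le_tsum ({⟨l', hl'⟩, ⟨l, hl⟩} : Finset Λ) (fun j _ => hnonneg j)
          rw [Finset.sum_pair hne, h1] at h2
          exact h2
        have h0 : a ⟨l, hl⟩ = 0 := le_antisymm (by rw [hone] at hfin; linarith) (hnonneg _)
        have h3 : ‖FT μ (-l' + l)‖ = 0 := by
          simp only [ha] at h0
          exact pow_eq_zero_iff (by norm_num) |>.mp h0
        rw [show -l' + l = l - l' by ring] at h3
        exact norm_eq_zero.mp h3
    refine ⟨horth, ?_⟩
    intro f hf
    have hon := orthonormal_of μ Λ horth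
    have hinner0 : ∀ l : Λ, @inner ℂ _ _ (E μ (l : ℝ)) f = 0 := fun l => by
      rw [inner_E_f]; exact hf (l : ℝ) l.2
    set V := (Submodule.span ℂ (Set.range (fun l : Λ => E μ (l : ℝ)))).topologicalClosure with hV
    have hXV : ∀ ξ : ℝ, E μ ξ ∈ V := by
      intro ξ
      apply mem_closure_span μ Λ hon (E μ ξ) (norm_E μ ξ)
      have hEξ : E μ ξ = E μ (-(-ξ)) := by rw [neg_neg]
      calc ∑' l : Λ, ‖@inner ℂ _ _ (E μ (l : ℝ)) (E μ ξ)‖ ^ 2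
          = ∑' l : Λ, ‖FT μ (-ξ + (l : ℝ))‖ ^ 2 :=
            tsum_congr fun l => by rw [hEξ, abs_inner_E]
        _ = 1 := hQ (-ξ)
    have hclosed : IsClosed {v : Lp ℂ 2 μ | @inner ℂ _ _ v f = 0} :=
      isClosed_eq (Continuous.inner continuous_id continuous_const) continuous_const
    have hspan1 : (Submodule.span ℂ (Set.range (fun l : Λ => E μ (l : ℝ))) : Set (Lp ℂ 2 μ)) ⊆
        {v : Lp ℂ 2 μ | @inner ℂ _ _ v f = 0} := by
      intro v hv
      refine Submodule.span_induction ?_ ?_ ?_ ?_ hv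
      · rintro _ ⟨l, rfl⟩; exact hinner0 l
      · exact inner_zero_left f
      · intro u w _ _ hu hw; rw [Set.mem_setOf_eq] at hu hw ⊢; rw [inner_add_left, hu, hw, add_zero]
      · intro c u _ hu; rw [Set.mem_setOf_eq] at hu ⊢; rw [inner_smul_left, hu, mul_zero]
    have hVf : ∀ v ∈ V, @inner ℂ _ _ v f = (0 : ℂ) := by
      intro v hvmem
      have hsubV : (V : Set (Lp ℂ 2 μ)) ⊆ {v : Lp ℂ 2 μ | @inner ℂ _ _ v f = 0} := by
        rw [hV, Submodule.topologicalClosure_coe]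
        exact closure_minimal hspan1 hclosed
      exact hsubV hvmem
    have hEf : ∀ ξ : ℝ, @inner ℂ _ _ (E μ ξ) f = (0 : ℂ) := fun ξ => hVf _ (hXV ξ)
    have hspan2 : (Submodule.span ℂ (Set.range (fun ξ : ℝ => E μ ξ)) : Set (Lp ℂ 2 μ)) ⊆
        {v : Lp ℂ 2 μ | @inner ℂ _ _ v f = 0} := by
      intro v hv
      refine Submodule.span_induction ?_ ?_ ?_ ?_ hv
      · rintro _ ⟨ξ, rfl⟩; exact hEf ξ
      · exact inner_zero_left f
      · intro u w _ _ hu hw; rw [Set.mem_setOf_eq] at hu hw ⊢; rw [inner_add_left, hu, hw, add_zero]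
      · intro c u _ hu; rw [Set.mem_setOf_eq] at hu ⊢; rw [inner_smul_left, hu, mul_zero]
    have hdense := dense_exp μ hcpt
    have hff : @inner ℂ _ _ f f = (0 : ℂ) := by
      have hmem : f ∈ closure ((Submodule.span ℂ (Set.range (fun ξ : ℝ => E μ ξ)) : Set (Lp ℂ 2 μ))) := by
        rw [← Submodule.topologicalClosure_coe, hdense]
        trivial
      exact closure_minimal hspan2 hclosed hmem
    rwa [inner_self_eq_zero] at hff
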